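/- For all a > 0, b > 0 and T > 0, it holds that ∫_0^T (a·b/(π·θ^{1/2}·(T−θ)^{3/2}))·e^{−a²/(2θ) − b²/(2(T−θ))} dθ = (2a/√(2πT))·e^{−(a+b)²/(2T)}. -/

import Mathlib

open MeasureTheory Real

open Filter Set Topology

noncomputable def myg : ℝ → ℝ := fun x => ∫ t in (0:ℝ)..x, Real.exp (-(t^2)/2)

lemma myg_cont : Continuous fun t : ℝ => Real.exp (-(t^2)/2) := by continuity

lemma myg_deriv (x : ℝ) : HasDerivAt myg (Real.exp (-(x^2)/2)) x :=
  (myg_cont.integral_hasStrictDerivAt 0 x).hasDerivAt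

lemma myg_int : Integrable (fun t : ℝ => Real.exp (-(t^2)/2)) := by
  have := integrable_exp_neg_mul_sq (b := (1/2:ℝ)) (by norm_num)
  convert this using 2 with t; ring_nf

lemma myg_top : Tendsto myg atTop (𝓝 (Real.sqrt (2*Real.pi)/2)) := by
  have h := intervalIntegral_tendsto_integral_Ioi (μ := volume) 0 myg_int.integrableOn
    (tendsto_id (α := ℝ))
  have hv : (∫ t in Ioi (0:ℝ), Real.exp (-(t^2)/2)) = Real.sqrt (2*Real.pi)/2 := by
    have := integral_gaussian_Ioi (1/2:ℝ)
    rw [show Real.pi / (1/2:ℝ) = 2*Real.pi by ring] at this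
    rw [← this]
    congr 1 with t; ring_nf
  rw [hv] at h; exact h

lemma myg_bot : Tendsto myg atBot (𝓝 (-(Real.sqrt (2*Real.pi)/2))) := by
  have h := intervalIntegral_tendsto_integral_Iic (μ := volume) 0 myg_int.integrableOn
    (tendsto_id (α := ℝ))
  have hv : (∫ t in Iic (0:ℝ), Real.exp (-(t^2)/2)) = Real.sqrt (2*Real.pi)/2 := by
    rw [← neg_zero, ← integral_comp_neg_Ioi]
    simp only [neg_zero, neg_sq]
    have := integral_gaussian_Ioi (1/2:ℝ)
    rw [show Real.pi / (1/2:ℝ) = 2*Real.pi by ring] at this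
    rw [← this]
    congr 1 with t; ring_nf
  rw [hv] at h
  have : myg = fun x => -∫ t in x..(0:ℝ), Real.exp (-(t^2)/2) := by
    funext x; rw [myg, intervalIntegral.integral_symm]
  rw [this]
  exact h.neg

/-- derivative of `√(T-x)/√x` -/
lemma w1_deriv {T θ : ℝ} (h1 : 0 < θ) (h2 : θ < T) :
    HasDerivAt (fun x => Real.sqrt (T-x)/Real.sqrt x)
      (-(T/(2*θ*Real.sqrt θ*Real.sqrt (T-θ)))) θ := by
  have hp : Real.sqrt θ ≠ 0 := by positivity
  have hq : Real.sqrt (T-θ) ≠ 0 := by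
    have : 0 < T - θ := by linarith
    positivity
  have hd1 : HasDerivAt (fun x => Real.sqrt (T-x)) (-(1/(2*Real.sqrt (T-θ)))) θ := by
    have h := (Real.hasDerivAt_sqrt (x := T-θ) (by intro h; nlinarith [h])).comp θ
      ((hasDerivAt_id θ).const_sub T)
    refine h.congr_deriv ?_; ring
  have hd2 : HasDerivAt Real.sqrt (1/(2*Real.sqrt θ)) θ := Real.hasDerivAt_sqrt h1.ne'
  have h := hd1.div hd2 hp
  refine h.congr_deriv ?_
  have e1 : Real.sqrt θ * Real.sqrt θ = θ := Real.mul_self_sqrt h1.le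
  have e2 : Real.sqrt (T-θ) * Real.sqrt (T-θ) = T-θ := Real.mul_self_sqrt (by linarith)
  set s := Real.sqrt θ
  set t := Real.sqrt (T-θ)
  field_simp
  linear_combination (T-θ) * e1 + (-θ) * e2

lemma w2_deriv {T θ : ℝ} (h1 : 0 < θ) (h2 : θ < T) :
    HasDerivAt (fun x => Real.sqrt x/Real.sqrt (T-x))
      (T/(2*(T-θ)*Real.sqrt (T-θ)*Real.sqrt θ)) θ := by
  have hp : Real.sqrt θ ≠ 0 := by positivity
  have hq : Real.sqrt (T-θ) ≠ 0 := by
    have : 0 < T - θ := by linarith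
    positivity
  have hd1 : HasDerivAt (fun x => Real.sqrt (T-x)) (-(1/(2*Real.sqrt (T-θ)))) θ := by
    have h := (Real.hasDerivAt_sqrt (x := T-θ) (by intro h; nlinarith [h])).comp θ
      ((hasDerivAt_id θ).const_sub T)
    refine h.congr_deriv ?_; ring
  have hd2 : HasDerivAt Real.sqrt (1/(2*Real.sqrt θ)) θ := Real.hasDerivAt_sqrt h1.ne'
  have h := hd2.div hd1 hq
  refine h.congr_deriv ?_
  have e1 : Real.sqrt θ * Real.sqrt θ = θ := Real.mul_self_sqrt h1.le
  have e2 : Real.sqrt (T-θ) * Real.sqrt (T-θ) = T-θ := Real.mul_self_sqrt (by linarith)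
  set s := Real.sqrt θ
  set t := Real.sqrt (T-θ)
  rw [← e2]
  field_simp
  linear_combination e1 + e2

/-- generic exponent identity -/
lemma exp_id1 (a b p q r : ℝ) (hp : p ≠ 0) (hq : q ≠ 0) (hr : r ≠ 0)
    (h : r*r = p*p + q*q) :
    -(a+b)^2/(2*(r*r)) + -(((a*(q/p) - b*(p/q))/r)^2)/2 = -a^2/(2*(p*p)) - b^2/(2*(q*q)) := by
  field_simp
  linear_combination (a^2*q^2 + b^2*p^2) * h

lemma exp_id2 (a b p q r : ℝ) (hp : p ≠ 0) (hq : q ≠ 0) (hr : r ≠ 0)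
    (h : r*r = p*p + q*q) :
    -(a-b)^2/(2*(r*r)) + -(((a*(q/p) + b*(p/q))/r)^2)/2 = -a^2/(2*(p*p)) - b^2/(2*(q*q)) := by
  field_simp
  linear_combination (a^2*q^2 + b^2*p^2) * h

/-- For `a, b, T > 0`,
`∫_0^T (ab/(π θ^{1/2} (T−θ)^{3/2}))·e^{−a²/(2θ) − b²/(2(T−θ))} dθ
  = (2a/√(2πT))·e^{−(a+b)²/(2T)}`. -/
theorem stmt_7 (a b T : ℝ) (ha : 0 < a) (hb : 0 < b) (hT : 0 < T) :
    ∫ θ in (0 : ℝ)..T,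
        a * b / (Real.pi * θ ^ ((1 : ℝ) / 2) * (T - θ) ^ ((3 : ℝ) / 2)) *
          Real.exp (-a ^ 2 / (2 * θ) - b ^ 2 / (2 * (T - θ)))
      = 2 * a / Real.sqrt (2 * Real.pi * T) * Real.exp (-(a + b) ^ 2 / (2 * T)) := by
  have hπ : (0:ℝ) < Real.pi := Real.pi_pos
  have hsT : (0:ℝ) < Real.sqrt T := Real.sqrt_pos.2 hT
  set c1 := Real.exp (-(a+b)^2/(2*T)) with hc1
  set c2 := Real.exp (-(a-b)^2/(2*T)) with hc2
  set f : ℝ → ℝ := fun θ => a*b/(Real.pi*Real.sqrt θ*((T-θ)*Real.sqrt (T-θ))) *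
      Real.exp (-a^2/(2*θ) - b^2/(2*(T-θ))) with hf
  set u : ℝ → ℝ := fun θ =>
      (a*(Real.sqrt (T-θ)/Real.sqrt θ) - b*(Real.sqrt θ/Real.sqrt (T-θ)))/Real.sqrt T with hu
  set v : ℝ → ℝ := fun θ =>
      (a*(Real.sqrt (T-θ)/Real.sqrt θ) + b*(Real.sqrt θ/Real.sqrt (T-θ)))/Real.sqrt T with hv
  set F : ℝ → ℝ := fun θ =>
      a/(Real.pi*Real.sqrt T) * (c1 * myg (-(u θ)) + c2 * myg (v θ)) with hF
  -- step 1: derivative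
  have hderiv : ∀ θ ∈ Ioo (0:ℝ) T, HasDerivAt F (f θ) θ := by
    rintro θ ⟨h1, h2⟩
    have h2' : 0 < T - θ := by linarith
    have hp : Real.sqrt θ ≠ 0 := (Real.sqrt_pos.2 h1).ne'
    have hq : Real.sqrt (T-θ) ≠ 0 := (Real.sqrt_pos.2 h2').ne'
    have hr : Real.sqrt T ≠ 0 := hsT.ne'
    have e1 : Real.sqrt θ * Real.sqrt θ = θ := Real.mul_self_sqrt h1.le
    have e2 : Real.sqrt (T-θ) * Real.sqrt (T-θ) = T-θ := Real.mul_self_sqrt h2'.le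
    have e3 : Real.sqrt T * Real.sqrt T = T := Real.mul_self_sqrt hT.le
    have hu' : HasDerivAt u
        ((a*(-(T/(2*θ*Real.sqrt θ*Real.sqrt (T-θ)))) -
          b*(T/(2*(T-θ)*Real.sqrt (T-θ)*Real.sqrt θ)))/Real.sqrt T) θ :=
      (((w1_deriv h1 h2).const_mul a).sub ((w2_deriv h1 h2).const_mul b)).div_const _
    have hv' : HasDerivAt v
        ((a*(-(T/(2*θ*Real.sqrt θ*Real.sqrt (T-θ)))) +
          b*(T/(2*(T-θ)*Real.sqrt (T-θ)*Real.sqrt θ)))/Real.sqrt T) θ :=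
      (((w1_deriv h1 h2).const_mul a).add ((w2_deriv h1 h2).const_mul b)).div_const _
    have hgu := (myg_deriv (-(u θ))).comp θ hu'.neg
    have hgv := (myg_deriv (v θ)).comp θ hv'
    have H := ((hgu.const_mul c1).add (hgv.const_mul c2)).const_mul (a/(Real.pi*Real.sqrt T))
    refine H.congr_deriv ?_
    have hE1 : c1 * Real.exp (-((-(u θ))^2)/2)
        = Real.exp (-a^2/(2*θ) - b^2/(2*(T-θ))) := by
      rw [hc1, ← Real.exp_add]
      congr 1
      have key := exp_id1 a b (Real.sqrt θ) (Real.sqrt (T-θ)) (Real.sqrt T) hp hq hr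
        (by rw [e1, e2, e3]; ring)
      rw [e1, e2, e3] at key
      rw [hu]
      rw [neg_sq]
      exact key
    have hE2 : c2 * Real.exp (-((v θ)^2)/2)
        = Real.exp (-a^2/(2*θ) - b^2/(2*(T-θ))) := by
      rw [hc2, ← Real.exp_add]
      congr 1
      have key := exp_id2 a b (Real.sqrt θ) (Real.sqrt (T-θ)) (Real.sqrt T) hp hq hr
        (by rw [e1, e2, e3]; ring)
      rw [e1, e2, e3] at key
      rw [hv]
      exact key
    set E := Real.exp (-a^2/(2*θ) - b^2/(2*(T-θ))) with hE
    set X1 := Real.exp (-((-(u θ))^2)/2) with hX1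
    set X2 := Real.exp (-((v θ)^2)/2) with hX2
    rw [hf]
    simp only
    rw [← mul_assoc c1 X1, hE1, ← mul_assoc c2 X2, hE2, ← hE]
    field_simp
    linear_combination (-2*E*θ*b) * e3
  -- step 2: limits
  set glim : ℝ := Real.sqrt (2*Real.pi)/2 with hglim
  set La : ℝ := a/(Real.pi*Real.sqrt T) * (c1 * (-glim) + c2 * glim) with hLa
  set Lb : ℝ := a/(Real.pi*Real.sqrt T) * (c1 * glim + c2 * glim) with hLb
  have hFa : Tendsto F (𝓝[Ioo (0:ℝ) T] 0) (𝓝 La) := by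
    have hsqθ : Tendsto (fun θ : ℝ => Real.sqrt θ) (𝓝[Ioo (0:ℝ) T] 0) (𝓝[>] 0) := by
      rw [tendsto_nhdsWithin_iff]
      constructor
      · have h0 : Tendsto Real.sqrt (𝓝 0) (𝓝 0) := by
          have := Real.continuous_sqrt.tendsto 0
          simpa [Real.sqrt_zero] using this
        exact h0.mono_left nhdsWithin_le_nhds
      · filter_upwards [eventually_mem_nhdsWithin] with x hx
        exact Real.sqrt_pos.2 hx.1
    have hnum : Tendsto (fun θ : ℝ => Real.sqrt (T-θ)) (𝓝[Ioo (0:ℝ) T] 0) (𝓝 (Real.sqrt T)) := by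
      have : ContinuousAt (fun θ : ℝ => Real.sqrt (T-θ)) 0 :=
        ((continuous_const.sub continuous_id).sqrt).continuousAt
      simpa using this.tendsto.mono_left nhdsWithin_le_nhds
    have hw1a : Tendsto (fun θ : ℝ => Real.sqrt (T-θ)/Real.sqrt θ) (𝓝[Ioo (0:ℝ) T] 0) atTop := by
      have := Filter.Tendsto.pos_mul_atTop hsT hnum hsqθ.inv_tendsto_nhdsGT_zero
      simpa [div_eq_mul_inv] using this
    have hw2a : Tendsto (fun θ : ℝ => Real.sqrt θ/Real.sqrt (T-θ)) (𝓝[Ioo (0:ℝ) T] 0) (𝓝 0) := by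
      have hc : ContinuousAt (fun θ : ℝ => Real.sqrt θ/Real.sqrt (T-θ)) 0 := by
        apply ContinuousAt.div Real.continuous_sqrt.continuousAt
          ((continuous_const.sub continuous_id).sqrt).continuousAt
        simpa using hsT.ne'
      have := hc.tendsto.mono_left (nhdsWithin_le_nhds (s := Ioo (0:ℝ) T))
      simpa [Real.sqrt_zero] using this
    have hua : Tendsto u (𝓝[Ioo (0:ℝ) T] 0) atTop := by
      rw [hu]
      apply Tendsto.atTop_div_const hsT
      simp only [sub_eq_add_neg]
      exact (Tendsto.const_mul_atTop ha hw1a).atTop_add ((hw2a.const_mul b).neg)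
    have hva : Tendsto v (𝓝[Ioo (0:ℝ) T] 0) atTop := by
      rw [hv]
      apply Tendsto.atTop_div_const hsT
      exact (Tendsto.const_mul_atTop ha hw1a).atTop_add (hw2a.const_mul b)
    have h1 : Tendsto (fun θ => myg (-(u θ))) (𝓝[Ioo (0:ℝ) T] 0) (𝓝 (-glim)) :=
      myg_bot.comp (tendsto_neg_atTop_atBot.comp hua)
    have h2 : Tendsto (fun θ => myg (v θ)) (𝓝[Ioo (0:ℝ) T] 0) (𝓝 glim) :=
      myg_top.comp hva
    have := ((h1.const_mul c1).add (h2.const_mul c2)).const_mul (a/(Real.pi*Real.sqrt T))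
    rw [hF, hLa]
    convert this using 2
  have hFb : Tendsto F (𝓝[Ioo (0:ℝ) T] T) (𝓝 Lb) := by
    have hsqTθ : Tendsto (fun θ : ℝ => Real.sqrt (T-θ)) (𝓝[Ioo (0:ℝ) T] T) (𝓝[>] 0) := by
      rw [tendsto_nhdsWithin_iff]
      constructor
      · have h0 : ContinuousAt (fun θ : ℝ => Real.sqrt (T-θ)) T :=
          ((continuous_const.sub continuous_id).sqrt).continuousAt
        have := h0.tendsto.mono_left (nhdsWithin_le_nhds (s := Ioo (0:ℝ) T))
        simpa [Real.sqrt_zero] using this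
      · filter_upwards [eventually_mem_nhdsWithin] with x hx
        exact Real.sqrt_pos.2 (by linarith [hx.2])
    have hnum : Tendsto (fun θ : ℝ => Real.sqrt θ) (𝓝[Ioo (0:ℝ) T] T) (𝓝 (Real.sqrt T)) :=
      (Real.continuous_sqrt.continuousAt).tendsto.mono_left nhdsWithin_le_nhds
    have hw2b : Tendsto (fun θ : ℝ => Real.sqrt θ/Real.sqrt (T-θ)) (𝓝[Ioo (0:ℝ) T] T) atTop := by
      have := Filter.Tendsto.pos_mul_atTop hsT hnum hsqTθ.inv_tendsto_nhdsGT_zero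
      simpa [div_eq_mul_inv] using this
    have hw1b : Tendsto (fun θ : ℝ => Real.sqrt (T-θ)/Real.sqrt θ) (𝓝[Ioo (0:ℝ) T] T) (𝓝 0) := by
      have hc : ContinuousAt (fun θ : ℝ => Real.sqrt (T-θ)/Real.sqrt θ) T := by
        apply ContinuousAt.div ((continuous_const.sub continuous_id).sqrt).continuousAt
          Real.continuous_sqrt.continuousAt hsT.ne'
      have := hc.tendsto.mono_left (nhdsWithin_le_nhds (s := Ioo (0:ℝ) T))
      simpa [Real.sqrt_zero] using this
    have hub : Tendsto u (𝓝[Ioo (0:ℝ) T] T) atBot := by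
      rw [hu]
      apply Tendsto.atBot_div_const hsT
      simp only [sub_eq_add_neg]
      exact Filter.Tendsto.add_atBot (hw1b.const_mul a)
        (tendsto_neg_atTop_atBot.comp (Tendsto.const_mul_atTop hb hw2b))
    have hvb : Tendsto v (𝓝[Ioo (0:ℝ) T] T) atTop := by
      rw [hv]
      apply Tendsto.atTop_div_const hsT
      exact Filter.Tendsto.add_atTop (hw1b.const_mul a) (Tendsto.const_mul_atTop hb hw2b)
    have h1 : Tendsto (fun θ => myg (-(u θ))) (𝓝[Ioo (0:ℝ) T] T) (𝓝 glim) :=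
      myg_top.comp (tendsto_neg_atBot_atTop.comp hub)
    have h2 : Tendsto (fun θ => myg (v θ)) (𝓝[Ioo (0:ℝ) T] T) (𝓝 glim) :=
      myg_top.comp hvb
    have := ((h1.const_mul c1).add (h2.const_mul c2)).const_mul (a/(Real.pi*Real.sqrt T))
    rw [hF, hLb]
    convert this using 2
  -- step 3: continuity of f on Ioo
  have hfc : ContinuousOn f (Ioo (0:ℝ) T) := by
    rw [hf]
    apply ContinuousOn.mul
    · apply ContinuousOn.div continuousOn_const
      · exact ((continuous_const.mul Real.continuous_sqrt).mul
          ((continuous_const.sub continuous_id).mul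
            ((continuous_const.sub continuous_id).sqrt))).continuousOn
      · rintro x ⟨h1, h2⟩
        have h2' : 0 < T - x := by linarith
        have hs1 := Real.sqrt_pos.2 h1
        have hs2 := Real.sqrt_pos.2 h2'
        positivity
    · apply ContinuousOn.rexp
      apply ContinuousOn.sub
      · apply ContinuousOn.div continuousOn_const (by fun_prop)
        rintro x ⟨h1, h2⟩
        positivity
      · apply ContinuousOn.div continuousOn_const (by fun_prop)
        rintro x ⟨h1, h2⟩
        have h2' : 0 < T - x := by linarith
        positivity
  -- step 4: sequences
  set an : ℕ → ℝ := fun n => T/(n+3) with han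
  set bn : ℕ → ℝ := fun n => T - T/(n+3) with hbn
  have han_mem : ∀ n, an n ∈ Ioo (0:ℝ) T := by
    intro n
    have h3 : (0:ℝ) < (n:ℝ)+3 := by positivity
    constructor
    · positivity
    · rw [div_lt_iff₀ h3]
      nlinarith [Nat.cast_nonneg (α := ℝ) n]
  have hbn_mem : ∀ n, bn n ∈ Ioo (0:ℝ) T := by
    intro n
    have h := han_mem n
    constructor
    · simp only [hbn]; linarith [h.2]
    · simp only [hbn]; linarith [h.1]
  have hanbn : ∀ n, an n ≤ bn n := by
    intro n
    have h3 : (0:ℝ) < (n:ℝ)+3 := by positivity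
    simp only [han, hbn]
    rw [div_le_iff₀ h3, sub_mul, div_mul_cancel₀ _ h3.ne']
    nlinarith [Nat.cast_nonneg (α := ℝ) n]
  have han_lim : Tendsto an atTop (𝓝 (0:ℝ)) := by
    apply Filter.Tendsto.const_div_atTop
    exact tendsto_atTop_add_const_right _ 3 tendsto_natCast_atTop_atTop
  have hbn_lim : Tendsto bn atTop (𝓝 T) := by
    have := (tendsto_const_nhds (x := T) (f := atTop (α := ℕ))).sub han_lim
    simpa using this
  have han_lim' : Tendsto an atTop (𝓝[Ioo (0:ℝ) T] 0) :=
    tendsto_nhdsWithin_iff.2 ⟨han_lim, Eventually.of_forall han_mem⟩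
  have hbn_lim' : Tendsto bn atTop (𝓝[Ioo (0:ℝ) T] T) :=
    tendsto_nhdsWithin_iff.2 ⟨hbn_lim, Eventually.of_forall hbn_mem⟩
  -- step 5: the improper integral
  have hcover : AECover (volume.restrict (Ioo (0:ℝ) T)) atTop
      (fun n => Icc (an n) (bn n)) := aecover_Ioo_of_Icc han_lim hbn_lim
  have hsub : ∀ n, Icc (an n) (bn n) ⊆ Ioo (0:ℝ) T := by
    intro n x hx
    exact ⟨lt_of_lt_of_le (han_mem n).1 hx.1, lt_of_le_of_lt hx.2 (hbn_mem n).2⟩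
  have hvals : ∀ n, (∫ x in Icc (an n) (bn n), f x ∂(volume.restrict (Ioo (0:ℝ) T)))
      = F (bn n) - F (an n) := by
    intro n
    rw [Measure.restrict_restrict measurableSet_Icc,
      Set.inter_eq_self_of_subset_left (hsub n), integral_Icc_eq_integral_Ioc,
      ← intervalIntegral.integral_of_le (hanbn n)]
    apply intervalIntegral.integral_eq_sub_of_hasDerivAt
    · intro x hx
      rw [Set.uIcc_of_le (hanbn n)] at hx
      exact hderiv x (hsub n hx)
    · apply ContinuousOn.intervalIntegrable
      rw [Set.uIcc_of_le (hanbn n)]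
      exact hfc.mono (hsub n)
  have hfi : ∀ n, IntegrableOn f (Icc (an n) (bn n)) (volume.restrict (Ioo (0:ℝ) T)) := by
    intro n
    rw [IntegrableOn, Measure.restrict_restrict measurableSet_Icc,
      Set.inter_eq_self_of_subset_left (hsub n)]
    exact (hfc.mono (hsub n)).integrableOn_compact isCompact_Icc
  have hnng : 0 ≤ᵐ[volume.restrict (Ioo (0:ℝ) T)] f := by
    rw [EventuallyLE, ae_restrict_iff' measurableSet_Ioo]
    apply Eventually.of_forall
    rintro x ⟨h1, h2⟩
    have h2' : 0 < T - x := by linarith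
    have : 0 < f x := by
      apply mul_pos _ (Real.exp_pos _)
      apply div_pos (by positivity)
      have := Real.sqrt_pos.2 h1
      have := Real.sqrt_pos.2 h2'
      positivity
    simp only [Pi.zero_apply]
    exact this.le
  have htends : Tendsto (fun n => ∫ x in Icc (an n) (bn n), f x
      ∂(volume.restrict (Ioo (0:ℝ) T))) atTop (𝓝 (Lb - La)) := by
    simp only [hvals]
    exact (hFb.comp hbn_lim').sub (hFa.comp han_lim')
  have hmain : (∫ x in Ioo (0:ℝ) T, f x) = Lb - La :=
    hcover.integral_eq_of_tendsto_of_nonneg_ae (Lb - La) hnng hfi htends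
  -- step 6: assemble
  have hLHS : (∫ θ in (0:ℝ)..T,
      a * b / (Real.pi * θ ^ ((1 : ℝ) / 2) * (T - θ) ^ ((3 : ℝ) / 2)) *
        Real.exp (-a ^ 2 / (2 * θ) - b ^ 2 / (2 * (T - θ))))
      = ∫ x in Ioo (0:ℝ) T, f x := by
    rw [intervalIntegral.integral_of_le hT.le, integral_Ioc_eq_integral_Ioo]
    apply setIntegral_congr_fun measurableSet_Ioo
    rintro x ⟨h1, h2⟩
    have h2' : 0 < T - x := by linarith
    rw [hf]
    simp only
    congr 2
    rw [show ((3:ℝ)/2) = 1 + 1/2 by norm_num, Real.rpow_add h2', Real.rpow_one,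
      ← Real.sqrt_eq_rpow, ← Real.sqrt_eq_rpow]
  rw [hLHS, hmain]
  -- Lb - La = RHS
  have h2π : Real.sqrt (2*Real.pi) * Real.sqrt (2*Real.pi) = 2*Real.pi :=
    Real.mul_self_sqrt (by positivity)
  have hsplit : Real.sqrt (2*Real.pi*T) = Real.sqrt (2*Real.pi) * Real.sqrt T :=
    Real.sqrt_mul (by positivity) T
  have h2πpos : (0:ℝ) < Real.sqrt (2*Real.pi) := Real.sqrt_pos.2 (by positivity)
  have expand : Lb - La = a*Real.sqrt (2*Real.pi)/(Real.pi*Real.sqrt T) * c1 := by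
    rw [hLb, hLa, hglim]; ring
  rw [expand, hsplit]
  set s := Real.sqrt (2*Real.pi) with hs
  field_simp
  linear_combination c1 * h2π
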